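/- For every real x ∈ (0,1], the integral ∫₀^x (log(1 + 1/a))^{1/2} da is at most x·(log(4/x))^{1/2}. -/

import Mathlib

open MeasureTheory Set Real

/-- Integrability of `log` on `(0, x]`. -/
lemma aux_log_intble (x : ℝ) (hx0 : 0 < x) (hx1 : x ≤ 1) :
    IntegrableOn Real.log (Set.Ioc (0 : ℝ) x) volume := by
  have hbound : IntegrableOn (fun a : ℝ => 2 * a ^ (-(1/2) : ℝ)) (Set.Ioc (0 : ℝ) x) volume := by
    have h : IntervalIntegrable (fun a : ℝ => a ^ (-(1/2) : ℝ)) volume 0 x :=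
      intervalIntegral.intervalIntegrable_rpow' (by norm_num)
    have := (h.const_mul 2)
    rwa [intervalIntegrable_iff_integrableOn_Ioc_of_le hx0.le] at this
  refine Integrable.mono' hbound Real.measurable_log.aestronglyMeasurable ?_
  refine (ae_restrict_iff' measurableSet_Ioc).2 (Filter.Eventually.of_forall fun a ha => ?_)
  have ha0 : 0 < a := ha.1
  have ha1 : a ≤ 1 := ha.2.trans hx1
  have hlognp : Real.log a ≤ 0 := Real.log_nonpos ha0.le ha1
  rw [Real.norm_eq_abs, abs_of_nonpos hlognp]
  have hs : (0:ℝ) < a ^ ((1/2) : ℝ) := Real.rpow_pos_of_pos ha0 _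
  have hloga : Real.log a = 2 * Real.log (a ^ ((1/2) : ℝ)) := by
    rw [Real.log_rpow ha0]; ring
  have h1 : Real.log (a ^ ((1/2) : ℝ)) ≥ 1 - (a ^ ((1/2) : ℝ))⁻¹ := by
    have := Real.log_le_sub_one_of_pos (x := (a ^ ((1/2) : ℝ))⁻¹) (by positivity)
    rw [Real.log_inv] at this
    linarith
  have hinv : (a ^ ((1/2) : ℝ))⁻¹ = a ^ (-(1/2) : ℝ) := by
    rw [← Real.rpow_neg ha0.le]
  nlinarith [hs, Real.rpow_nonneg ha0.le (-(1/2) : ℝ), h1, hinv.symm ▸ h1]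

/-- Value of `∫_{(0,x]} log`. -/
lemma aux_int_log (x : ℝ) (hx0 : 0 < x) (hx1 : x ≤ 1) :
    ∫ a in Set.Ioc (0 : ℝ) x, Real.log a = x * Real.log x - x := by
  have hint : IntervalIntegrable Real.log volume 0 x :=
    (intervalIntegrable_iff_integrableOn_Ioc_of_le hx0.le).2 (aux_log_intble x hx0 hx1)
  have hderiv : ∀ a ∈ Set.Ioo (0:ℝ) x,
      HasDerivWithinAt (fun a : ℝ => a * Real.log a - a) (Real.log a) (Set.Ioi a) a := by
    intro a ha
    have h1 : HasDerivAt (fun a : ℝ => a * Real.log a) (Real.log a + 1) a := by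
      have := (hasDerivAt_id a).mul (Real.hasDerivAt_log ha.1.ne')
      exact this.congr_deriv (by simp [ha.1.ne'])
    exact ((h1.sub (hasDerivAt_id a)).hasDerivWithinAt).congr_deriv (by ring)
  have hcont : ContinuousOn (fun a : ℝ => a * Real.log a - a) (Set.Icc 0 x) :=
    (Real.continuous_mul_log.sub continuous_id).continuousOn
  have := intervalIntegral.integral_eq_sub_of_hasDeriv_right_of_le hx0.le hcont hderiv hint
  rw [intervalIntegral.integral_of_le hx0.le] at this
  simpa using this

/-- Value of `∫_{(0,x]} log (1+a)`. -/
lemma aux_int_log1 (x : ℝ) (hx0 : 0 < x) :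
    ∫ a in Set.Ioc (0 : ℝ) x, Real.log (1 + a) = (1 + x) * Real.log (1 + x) - x := by
  have hcont : ContinuousOn (fun a : ℝ => Real.log (1 + a)) (Set.uIcc 0 x) := by
    apply ContinuousOn.log (continuous_const.add continuous_id).continuousOn
    intro a ha
    rw [Set.uIcc_of_le hx0.le] at ha
    simp only [Pi.add_apply, id_eq]
    nlinarith [ha.1]
  have hint : IntervalIntegrable (fun a : ℝ => Real.log (1 + a)) volume 0 x :=
    hcont.intervalIntegrable
  have hderiv : ∀ a ∈ Set.Ioo (0:ℝ) x,
      HasDerivWithinAt (fun a : ℝ => (1 + a) * Real.log (1 + a) - a) (Real.log (1 + a))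
        (Set.Ioi a) a := by
    intro a ha
    have hpos : (0:ℝ) < 1 + a := by nlinarith [ha.1]
    have hu : HasDerivAt (fun a : ℝ => 1 + a) 1 a := (hasDerivAt_id a).const_add 1
    have hl : HasDerivAt (fun a : ℝ => Real.log (1 + a)) (1 / (1 + a)) a := by
      exact ((Real.hasDerivAt_log hpos.ne').comp a hu).congr_deriv (by simp)
    have h1 := hu.mul hl
    have h2 := h1.sub (hasDerivAt_id a)
    exact (h2.congr_deriv (by rw [mul_one_div_cancel hpos.ne']; ring)).hasDerivWithinAt
  have hcont' : ContinuousOn (fun a : ℝ => (1 + a) * Real.log (1 + a) - a) (Set.Icc 0 x) := by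
    apply ContinuousOn.sub _ continuous_id.continuousOn
    apply ContinuousOn.mul (continuous_const.add continuous_id).continuousOn
    apply ContinuousOn.log (continuous_const.add continuous_id).continuousOn
    intro a ha; simp only [Pi.add_apply, id_eq]; nlinarith [ha.1]
  have := intervalIntegral.integral_eq_sub_of_hasDeriv_right_of_le hx0.le hcont' hderiv hint
  rw [intervalIntegral.integral_of_le hx0.le] at this
  simpa using this

/-- Key inequality: `(1+x) log (1+x) ≤ x log 4` for `x ∈ [0,1]`, by convexity of `t log t`. -/
lemma aux_key (x : ℝ) (hx0 : 0 ≤ x) (hx1 : x ≤ 1) :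
    (1 + x) * Real.log (1 + x) ≤ x * Real.log 4 := by
  have h := Real.convexOn_mul_log.2 (Set.mem_Ici.2 (by norm_num : (0:ℝ) ≤ 1))
    (Set.mem_Ici.2 (by norm_num : (0:ℝ) ≤ 2)) (by linarith : (0:ℝ) ≤ 1 - x) hx0 (by ring)
  simp only [smul_eq_mul] at h
  have h14 : Real.log 4 = 2 * Real.log 2 := by
    rw [show (4:ℝ) = 2^2 by norm_num, Real.log_pow]; push_cast; ring
  have he : (1 - x) * 1 + x * 2 = 1 + x := by ring
  rw [he] at h
  simp only [Real.log_one] at h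
  nlinarith [h]

/-- For every `x ∈ (0,1]`,
`∫₀^x √(log(1 + 1/a)) da ≤ x · √(log(4/x))`. -/
theorem stmt_16 (x : ℝ) (hx0 : 0 < x) (hx1 : x ≤ 1) :
    ∫ a in Set.Ioc (0 : ℝ) x, Real.sqrt (Real.log (1 + 1 / a)) ≤
      x * Real.sqrt (Real.log (4 / x)) := by
  set t : Set ℝ := Set.Ioc (0:ℝ) x with ht_def
  set f : ℝ → ℝ := fun a => Real.log (1 + 1 / a) with hf_def
  have hmeas : MeasurableSet t := measurableSet_Ioc
  have hfeq : ∀ a ∈ t, f a = Real.log (1 + a) - Real.log a := by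
    intro a ha
    have ha0 : 0 < a := ha.1
    have h : (1:ℝ) + 1 / a = (1 + a) / a := by field_simp; ring
    simp only [hf_def]
    rw [h, Real.log_div (by positivity) ha0.ne']
  have h1i : IntegrableOn (fun a : ℝ => Real.log (1 + a)) t volume := by
    apply ContinuousOn.integrableOn_Icc (a := 0) (b := x) ?_ |>.mono_set Set.Ioc_subset_Icc_self
    apply ContinuousOn.log (continuous_const.add continuous_id).continuousOn
    intro a ha; simp only [Pi.add_apply, id_eq]; nlinarith [ha.1]
  have hli := aux_log_intble x hx0 hx1
  have htop : volume t ≠ ⊤ := by rw [ht_def, Real.volume_Ioc]; exact ENNReal.ofReal_ne_top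
  have hfi : IntegrableOn f t volume := by
    have hsub : IntegrableOn (fun a : ℝ => Real.log (1 + a) - Real.log a) t volume := h1i.sub hli
    exact hsub.congr_fun (fun a ha => (hfeq a ha).symm) hmeas
  have hfnn : ∀ a ∈ t, 0 ≤ f a := by
    intro a ha
    apply Real.log_nonneg
    have ha0 : 0 < a := ha.1
    have : 0 < 1 / a := by positivity
    linarith
  -- value of the integral of f
  have hI : ∫ a in t, f a = (1 + x) * Real.log (1 + x) - x * Real.log x := by
    rw [setIntegral_congr_fun hmeas hfeq, integral_sub h1i hli, aux_int_log1 x hx0,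
      aux_int_log x hx0 hx1]
    ring
  have hIle : ∫ a in t, f a ≤ x * Real.log (4 / x) := by
    rw [hI, Real.log_div (by norm_num) hx0.ne']
    have := aux_key x hx0.le hx1
    nlinarith [this]
  -- integrability of sqrt ∘ f
  have hgi : IntegrableOn (fun a => Real.sqrt (f a)) t volume := by
    have hbd : IntegrableOn (fun a => (f a + 1) / 2) t volume :=
      (hfi.add (integrableOn_const htop)).div_const 2
    refine Integrable.mono' hbd ?_ ?_
    · exact (Real.continuous_sqrt.measurable.comp
        ((measurable_const.add (measurable_const.div measurable_id)).log)).aestronglyMeasurable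
    · refine (ae_restrict_iff' hmeas).2 (Filter.Eventually.of_forall fun a ha => ?_)
      have h0 := hfnn a ha
      rw [Real.norm_eq_abs, abs_of_nonneg (Real.sqrt_nonneg _)]
      nlinarith [Real.sq_sqrt h0, sq_nonneg (Real.sqrt (f a) - 1)]
  -- Jensen
  have h0 : volume t ≠ 0 := by
    rw [ht_def, Real.volume_Ioc]
    simp only [ne_eq, ENNReal.ofReal_eq_zero, not_le, sub_zero]
    exact hx0
  have hconc : ConcaveOn ℝ (Set.Ici (0:ℝ)) Real.sqrt := by
    have := Real.strictConcaveOn_sqrt.concaveOn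
    convert this using 1
  have hjensen := hconc.le_map_set_average (Real.continuous_sqrt.continuousOn) isClosed_Ici
    h0 htop ((ae_restrict_iff' hmeas).2 (Filter.Eventually.of_forall fun a ha =>
      Set.mem_Ici.2 (hfnn a ha))) hfi hgi
  -- convert averages to integrals
  have hvol : volume.real t = x := by
    rw [measureReal_def, ht_def, Real.volume_Ioc, sub_zero, ENNReal.toReal_ofReal hx0.le]
  rw [setAverage_eq, setAverage_eq, hvol, smul_eq_mul, smul_eq_mul] at hjensen
  have havg_le : x⁻¹ * ∫ a in t, f a ≤ Real.log (4 / x) := by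
    rw [inv_mul_le_iff₀ hx0]
    exact hIle
  have hsq : Real.sqrt (x⁻¹ * ∫ a in t, f a) ≤ Real.sqrt (Real.log (4 / x)) :=
    Real.sqrt_le_sqrt havg_le
  have : ∫ a in t, Real.sqrt (f a) = x * (x⁻¹ * ∫ a in t, Real.sqrt (f a)) := by
    field_simp
  rw [this]
  calc x * (x⁻¹ * ∫ a in t, Real.sqrt (f a))
      ≤ x * Real.sqrt (x⁻¹ * ∫ a in t, f a) :=
        mul_le_mul_of_nonneg_left hjensen hx0.le
    _ ≤ x * Real.sqrt (Real.log (4 / x)) := mul_le_mul_of_nonneg_left hsq hx0.le
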